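/- arXiv:2004.13465 — 2 statements merged into one kernel-verified Lean document; each statement's English description precedes it below -/
import Mathlib

section
/- Let r_1,...,r_n be independent real random variables with E[|r_i|^{1+ε}] ≤ v for some ε ∈ (0,1], let β_1,...,β_n ∈ ℝ and h = (Σ_i |β_i|^{1+ε})^{1/(1+ε)}. Then Σ_i E[(β_i r_i · 1_{|β_i r_i| ≤ h})²] ≤ h² v. -/
open MeasureTheory ProbabilityTheory

theorem stmt_6 {Ω : Type*} [MeasurableSpace Ω] (μ : Measure Ω) [IsProbabilityMeasure μ]
    (n : ℕ) (r : Fin n → Ω → ℝ) (ε v : ℝ) (hε : 0 < ε) (hε1 : ε ≤ 1) (hv : 0 < v)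
    (hindep : iIndepFun r μ)
    (hmom : ∀ i, ∫ ω, |r i ω| ^ (1 + ε) ∂μ ≤ v)
    (hmomInt : ∀ i, Integrable (fun ω => |r i ω| ^ (1 + ε)) μ)
    (β : Fin n → ℝ) (h : ℝ) (hh : h = (∑ i, |β i| ^ (1 + ε)) ^ (1 / (1 + ε))) :
    ∑ i, ∫ ω, (if |β i * r i ω| ≤ h then β i * r i ω else 0) ^ 2 ∂μ ≤ h ^ 2 * v := by
  have hS : 0 ≤ ∑ i, |β i| ^ (1 + ε) :=
    Finset.sum_nonneg fun i _ => Real.rpow_nonneg (abs_nonneg _) _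
  have hh0 : 0 ≤ h := hh ▸ Real.rpow_nonneg hS _
  have h1ε : (0:ℝ) < 1 + ε := by linarith
  have hpow : h ^ (1 + ε) = ∑ i, |β i| ^ (1 + ε) := by
    rw [hh, ← Real.rpow_mul hS, one_div_mul_cancel h1ε.ne', Real.rpow_one]
  have key : ∀ i, ∫ ω, (if |β i * r i ω| ≤ h then β i * r i ω else 0) ^ 2 ∂μ
      ≤ |β i| ^ (1 + ε) * (h ^ (1 - ε) * v) := by
    intro i
    have hfun : (fun ω => |β i * r i ω| ^ (1 + ε) * h ^ (1 - ε))
        = fun ω => (|β i| ^ (1 + ε) * h ^ (1 - ε)) * |r i ω| ^ (1 + ε) := by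
      funext ω
      rw [abs_mul, Real.mul_rpow (abs_nonneg _) (abs_nonneg _)]; ring
    have hg : Integrable (fun ω => |β i * r i ω| ^ (1 + ε) * h ^ (1 - ε)) μ := by
      rw [hfun]; exact (hmomInt i).const_mul _
    have hle : ∫ ω, (if |β i * r i ω| ≤ h then β i * r i ω else 0) ^ 2 ∂μ
        ≤ ∫ ω, |β i * r i ω| ^ (1 + ε) * h ^ (1 - ε) ∂μ := by
      apply integral_mono_of_nonneg
      · filter_upwards with ω; positivity
      · exact hg
      · filter_upwards with ω
        by_cases hc : |β i * r i ω| ≤ h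
        · simp only [hc, if_true]
          have h2 : (β i * r i ω) ^ 2 = |β i * r i ω| ^ ((1 + ε) + (1 - ε)) := by
            rw [show (1 + ε) + (1 - ε) = ((2:ℕ):ℝ) by push_cast; ring,
              Real.rpow_natCast, sq_abs]
          rw [h2, Real.rpow_add' (abs_nonneg _) (by intro hc'; linarith)]
          exact mul_le_mul_of_nonneg_left
            (Real.rpow_le_rpow (abs_nonneg _) hc (by linarith))
            (Real.rpow_nonneg (abs_nonneg _) _)
        · rw [if_neg hc, zero_pow two_ne_zero]
          positivity
    calc ∫ ω, (if |β i * r i ω| ≤ h then β i * r i ω else 0) ^ 2 ∂μ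
        ≤ ∫ ω, |β i * r i ω| ^ (1 + ε) * h ^ (1 - ε) ∂μ := hle
      _ = (|β i| ^ (1 + ε) * h ^ (1 - ε)) * ∫ ω, |r i ω| ^ (1 + ε) ∂μ := by
          rw [hfun, integral_const_mul]
      _ ≤ (|β i| ^ (1 + ε) * h ^ (1 - ε)) * v := by
          apply mul_le_mul_of_nonneg_left (hmom i)
          positivity
      _ = |β i| ^ (1 + ε) * (h ^ (1 - ε) * v) := by ring
  calc ∑ i, ∫ ω, (if |β i * r i ω| ≤ h then β i * r i ω else 0) ^ 2 ∂μ
      ≤ ∑ i, |β i| ^ (1 + ε) * (h ^ (1 - ε) * v) :=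
        Finset.sum_le_sum fun i _ => key i
    _ = (∑ i, |β i| ^ (1 + ε)) * (h ^ (1 - ε) * v) := by rw [← Finset.sum_mul]
    _ = (h ^ (1 + ε) * h ^ (1 - ε)) * v := by rw [hpow]; ring
    _ = h ^ 2 * v := by
        rw [← Real.rpow_add' hh0 (by intro hc; linarith),
          show (1 + ε) + (1 - ε) = ((2:ℕ):ℝ) by push_cast; ring, Real.rpow_natCast]
end

section
/- Let γ = (K/(T+2K))^{1/(1+ε)} with T ≥ K ≥ 4 and ε ∈ (0,1]. Then T·γ^ε·(1 − 1/K − (√(ln 2)/2)·√((T/K)·γ^{1+ε}/(1 − 2γ^{1+ε}))) ≥ (1/8)·T^{1/(1+ε)}·K^{ε/(1+ε)}. -/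
theorem stmt_16 (T K ε γ : ℝ) (hK : 4 ≤ K) (hTK : K ≤ T)
    (hε : 0 < ε) (hε1 : ε ≤ 1)
    (hγ : γ = (K / (T + 2 * K)) ^ (1 / (1 + ε))) :
    (1 / 8) * T ^ (1 / (1 + ε)) * K ^ (ε / (1 + ε)) ≤
      T * γ ^ ε * (1 - 1 / K -
        (Real.sqrt (Real.log 2) / 2) *
          Real.sqrt ((T / K) * γ ^ (1 + ε) / (1 - 2 * γ ^ (1 + ε)))) := by
  have hT : (4:ℝ) ≤ T := le_trans hK hTK
  have hT0 : (0:ℝ) < T := by linarith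
  have hK0 : (0:ℝ) < K := by linarith
  have hD : (0:ℝ) < T + 2 * K := by linarith
  have hε' : (0:ℝ) < 1 + ε := by linarith
  have hc0 : (0:ℝ) < K / (T + 2 * K) := div_pos hK0 hD
  have hγc : γ ^ (1 + ε) = K / (T + 2 * K) := by
    rw [hγ, ← Real.rpow_mul hc0.le, one_div_mul_cancel hε'.ne', Real.rpow_one]
  have harg : (T / K) * γ ^ (1 + ε) / (1 - 2 * γ ^ (1 + ε)) = 1 := by
    rw [hγc]
    have h1 : 1 - 2 * (K / (T + 2 * K)) = T / (T + 2 * K) := by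
      field_simp
      ring
    rw [h1]
    field_simp
  rw [harg, Real.sqrt_one, mul_one]
  have hγε : γ ^ ε = (K / (T + 2 * K)) ^ (ε / (1 + ε)) := by
    rw [hγ, ← Real.rpow_mul hc0.le, div_mul_eq_mul_div, one_mul]
  set e := ε / (1 + ε) with he
  have he0 : 0 ≤ e := by positivity
  have heh : e ≤ 1/2 := by
    rw [he, div_le_iff₀ hε']; linarith
  -- key identity
  have hkey : T * γ ^ ε = T ^ (1 / (1 + ε)) * K ^ e * (T / (T + 2 * K)) ^ e := by
    rw [hγε, Real.div_rpow hK0.le hD.le, Real.div_rpow hT0.le hD.le]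
    have hsum : T ^ (1 / (1 + ε)) * T ^ e = T := by
      rw [← Real.rpow_add hT0]
      have : 1 / (1 + ε) + e = 1 := by
        rw [he]; field_simp
      rw [this, Real.rpow_one]
    have hDne : (T + 2 * K) ^ e ≠ 0 := by positivity
    field_simp
    linear_combination (-1) * hsum
  -- bound on (T/(T+2K))^e
  have hr : (0.57:ℝ) ≤ (T / (T + 2 * K)) ^ e := by
    have h13 : (1/3 : ℝ) ≤ T / (T + 2 * K) := by
      rw [div_le_div_iff₀ (by norm_num) hD]; linarith
    have h1 : ((1:ℝ)/3) ^ e ≤ (T / (T + 2 * K)) ^ e :=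
      Real.rpow_le_rpow (by norm_num) h13 he0
    have h2 : ((1:ℝ)/3) ^ ((1:ℝ)/2) ≤ ((1:ℝ)/3) ^ e :=
      Real.rpow_le_rpow_of_exponent_ge (by norm_num) (by norm_num) heh
    have h3 : (0.57:ℝ) ≤ ((1:ℝ)/3) ^ ((1:ℝ)/2) := by
      rw [← Real.sqrt_eq_rpow]
      have h4 := Real.sqrt_le_sqrt (show ((0.57:ℝ))^2 ≤ 1/3 by norm_num)
      rwa [Real.sqrt_sq (by norm_num)] at h4
    linarith
  -- bound on the bracket
  have hA : (0.33:ℝ) ≤ 1 - 1 / K - Real.sqrt (Real.log 2) / 2 := by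
    have h1 : 1 / K ≤ 1 / 4 := by
      rw [div_le_div_iff₀ hK0 (by norm_num)]; linarith
    have h2 : Real.sqrt (Real.log 2) ≤ 0.84 := by
      have : Real.log 2 ≤ (0.84:ℝ)^2 := by
        nlinarith [Real.log_two_lt_d9]
      calc Real.sqrt (Real.log 2) ≤ Real.sqrt ((0.84:ℝ)^2) := Real.sqrt_le_sqrt this
        _ = 0.84 := Real.sqrt_sq (by norm_num)
    linarith
  have hP : (0:ℝ) < T ^ (1 / (1 + ε)) * K ^ e := by positivity
  rw [hkey]
  nlinarith [hP, hr, hA, mul_le_mul hr hA (by norm_num) (le_trans (by norm_num) hr)]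
end
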